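/- Let d_1, …, d_K be distinct squarefree integers greater than 1, and for each i let ε_i > 1 be the fundamental unit of the real quadratic field ℚ(√d_i), i.e. the smallest unit of its ring of integers that is greater than 1 (under the real embedding with √d_i > 0). Then ε_1, …, ε_K are multiplicatively independent: if m_1, …, m_K are integers with ∏_{i=1}^K ε_i^{m_i} = 1, then m_1 = ⋯ = m_K = 0. -/

import Mathlib

open Polynomial

/-- The units of the ring of integers of the real quadratic field `ℚ(√d)` (embedded in `ℝ`
with `√d > 0`) are exactly the numbers `(a + b√d)/2` with `a, b ∈ ℤ` and `a² − d·b² = ±4`. -/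
def IsQuadUnit (d : ℤ) (x : ℝ) : Prop :=
  ∃ a b : ℤ, x = ((a : ℝ) + (b : ℝ) * Real.sqrt (d : ℝ)) / 2 ∧
    (a ^ 2 - d * b ^ 2 = 4 ∨ a ^ 2 - d * b ^ 2 = -4)

lemma squarefree_eq_of_mul_isSquare {x y : ℤ} (hx : 0 < x)
    (hsx : Squarefree x) (hsy : Squarefree y) (h : IsSquare (x * y)) : x = y := by
  obtain ⟨c, hc⟩ := h
  have hxc : x ∣ c := by
    rw [← Squarefree.dvd_pow_iff_dvd hsx (two_ne_zero)]
    exact ⟨y, by rw [sq, ← hc]⟩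
  obtain ⟨e, he⟩ := hxc
  have hxe : x * y = x * (x * e * e) := by rw [hc, he]; ring
  have hy' : y = x * e * e := mul_left_cancel₀ (ne_of_gt hx) hxe
  have hu : IsUnit e := hsy e ⟨x, by rw [hy']; ring⟩
  rcases Int.isUnit_iff.mp hu with h1 | h1 <;> subst h1 <;> simpa using hy'.symm

lemma splits_X_sq_sub_C {c : ℚ} (hc : (0:ℝ) ≤ (c:ℝ)) :
    ((X ^ 2 - C c).map (algebraMap ℚ ℝ)).Splits := by
  have h2 : Real.sqrt c * Real.sqrt c = (c : ℝ) := Real.mul_self_sqrt hc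
  have hmap : (X ^ 2 - C c).map (algebraMap ℚ ℝ)
      = (X - C (Real.sqrt c)) * (X - C (-Real.sqrt c)) := by
    simp only [Polynomial.map_sub, Polynomial.map_pow, Polynomial.map_X, Polynomial.map_C]
    rw [show (algebraMap ℚ ℝ) c = (c:ℝ) from rfl,
      show Polynomial.C ((c:ℝ)) = Polynomial.C (Real.sqrt c * Real.sqrt c) by rw [h2],
      map_mul, map_neg]
    ring
  rw [hmap]
  exact Splits.mul (Splits.X_sub_C _) (Splits.X_sub_C _)

set_option maxHeartbeats 2000000 in
/-- **Multiplicative independence of fundamental units**: if `d_1, …, d_K` are distinct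
squarefree integers `> 1` and `ε_i` is the fundamental unit of `ℚ(√d_i)` (the least unit of
its ring of integers exceeding `1`), then `∏ ε_i ^ m_i = 1` with `m_i ∈ ℤ` forces all
`m_i = 0`. -/
theorem fundamental_units_multiplicatively_independent
    (K : ℕ) (d : Fin K → ℤ) (hd_gt : ∀ i, 1 < d i) (hd_sqfree : ∀ i, Squarefree (d i))
    (hd_distinct : Function.Injective d)
    (ε : Fin K → ℝ)
    (hε : ∀ i, IsLeast {x : ℝ | 1 < x ∧ IsQuadUnit (d i) x} (ε i))
    (m : Fin K → ℤ) (hprod : ∏ i, ε i ^ m i = 1) :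
    ∀ i, m i = 0 := by
  classical
  have hε1 : ∀ i, 1 < ε i := fun i => (hε i).1.1
  have hεpos : ∀ i, (0:ℝ) < ε i := fun i => lt_trans one_pos (hε1 i)
  have hdpos : ∀ i, (0:ℝ) < ((d i : ℤ) : ℝ) := fun i => by
    exact_mod_cast lt_trans zero_lt_one (hd_gt i)
  have hsqpos : ∀ i, 0 < Real.sqrt ((d i : ℤ) : ℝ) := fun i => Real.sqrt_pos.mpr (hdpos i)
  set p : Polynomial ℚ := ∏ i, (X ^ 2 - C ((d i : ℚ))) with hp
  have hpsplits : (p.map (algebraMap ℚ ℝ)).Splits := by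
    rw [hp, Polynomial.map_prod]
    exact Splits.prod fun i _ => splits_X_sq_sub_C (by push_cast; exact le_of_lt (hdpos i))
  set F : IntermediateField ℚ ℝ := IntermediateField.adjoin ℚ (p.rootSet ℝ) with hF
  haveI hsf : p.IsSplittingField ℚ F := IntermediateField.adjoin_rootSet_isSplittingField hpsplits
  haveI : FiniteDimensional ℚ F := Polynomial.IsSplittingField.finiteDimensional F p
  haveI : Normal ℚ F := Normal.of_isSplittingField p
  haveI : IsGalois ℚ F := ⟨⟩
  have hpne : p ≠ 0 := by
    have : p.Monic := monic_prod_of_monic _ _ fun i _ => monic_X_pow_sub_C _ two_ne_zero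
    exact this.ne_zero
  have hroot : ∀ i, Real.sqrt ((d i : ℤ) : ℝ) ∈ p.rootSet ℝ := by
    intro i
    rw [Polynomial.mem_rootSet]
    refine ⟨hpne, ?_⟩
    rw [hp, map_prod]
    refine Finset.prod_eq_zero (Finset.mem_univ i) ?_
    have : Real.sqrt ((d i : ℤ) : ℝ) ^ 2 = ((d i : ℤ) : ℝ) := Real.sq_sqrt (le_of_lt (hdpos i))
    simp [this]
  have hsd_mem : ∀ i, Real.sqrt ((d i : ℤ) : ℝ) ∈ F :=
    fun i => IntermediateField.subset_adjoin ℚ _ (hroot i)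
  set sd : Fin K → F := fun i => ⟨Real.sqrt ((d i : ℤ) : ℝ), hsd_mem i⟩ with hsd
  have hsd_ne : ∀ i, sd i ≠ 0 := by
    intro i h
    have h2 := congrArg (Subtype.val) h
    simp only [hsd] at h2
    exact (ne_of_gt (hsqpos i)) h2
  have hdich : ∀ (σ : F ≃ₐ[ℚ] F) i, σ (sd i) = sd i ∨ σ (sd i) = - sd i := by
    intro σ i
    have hsq : (sd i) ^ 2 = algebraMap ℚ F ((d i : ℚ)) := by
      apply Subtype.ext
      have : ((sd i : ℝ)) ^ 2 = ((d i : ℤ) : ℝ) := Real.sq_sqrt (le_of_lt (hdpos i))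
      push_cast
      convert this using 1
      show (((d i : ℚ)) : ℝ) = ((d i : ℤ) : ℝ)
      exact Rat.cast_intCast _
    have h1 : σ (sd i) ^ 2 = sd i ^ 2 := by
      rw [← map_pow, hsq, AlgEquiv.commutes]
    have h2 : (σ (sd i) - sd i) * (σ (sd i) + sd i) = 0 := by linear_combination h1
    rcases mul_eq_zero.mp h2 with h | h
    · exact Or.inl (sub_eq_zero.mp h)
    · exact Or.inr (eq_neg_of_add_eq_zero_left h)
  set sgn : Fin K → (F ≃ₐ[ℚ] F) → ℝ := fun i σ => if σ (sd i) = sd i then 1 else -1 with hsgn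
  have hsgn_val : ∀ i σ, ((σ (sd i) : ℝ)) = sgn i σ * Real.sqrt ((d i : ℤ) : ℝ) := by
    intro i σ
    by_cases h : σ (sd i) = sd i
    · simp only [hsgn, if_pos h, one_mul, h]
      simp only [hsd]
    · rcases hdich σ i with h' | h'
      · exact absurd h' h
      · rw [h']
        simp only [hsgn, if_neg h]
        simp only [hsd]
        push_cast
        ring
  choose a b hform hnorm using fun i => (hε i).1.2
  have h2F : (2:ℝ) ∈ F := by exact_mod_cast IntermediateField.natCast_mem F 2
  have hεF_mem : ∀ i, ε i ∈ F := by
    intro i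
    rw [hform i]
    exact div_mem (add_mem (IntermediateField.intCast_mem F (a i))
      (mul_mem (IntermediateField.intCast_mem F (b i)) (hsd_mem i))) h2F
  set εF : Fin K → F := fun i => ⟨ε i, hεF_mem i⟩ with hεFdef
  have hεF_ne : ∀ i, εF i ≠ 0 := by
    intro i h
    have h2 := congrArg (Subtype.val) h
    simp only [hεFdef] at h2
    exact (ne_of_gt (hεpos i)) h2
  have hεF_eq : ∀ i, εF i = ((a i : F) + (b i : F) * sd i) / 2 := by
    intro i
    apply Subtype.ext
    have hR : F.val (((a i : F) + (b i : F) * sd i) / 2)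
        = ((a i : ℝ) + (b i : ℝ) * Real.sqrt ((d i : ℤ) : ℝ)) / 2 := by
      rw [map_div₀, map_add, map_mul, map_intCast, map_intCast, map_ofNat]
      rfl
    show F.val (εF i) = F.val (((a i : F) + (b i : F) * sd i) / 2)
    rw [hR]
    exact hform i
  have hσε : ∀ i (σ : F ≃ₐ[ℚ] F),
      ((σ (εF i) : ℝ)) = ((a i : ℝ) + (b i : ℝ) * (sgn i σ * Real.sqrt ((d i : ℤ) : ℝ))) / 2 := by
    intro i σ
    have h1 : σ (εF i) = ((a i : F) + (b i : F) * σ (sd i)) / 2 := by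
      rw [hεF_eq i, map_div₀, map_add, map_mul, map_intCast, map_intCast, map_ofNat]
    show F.val (σ (εF i)) = _
    rw [h1, map_div₀, map_add, map_mul, map_intCast, map_intCast, map_ofNat]
    rw [show F.val (σ (sd i)) = ((σ (sd i) : ℝ)) from rfl, hsgn_val i σ]
  have hlogε : ∀ i (σ : F ≃ₐ[ℚ] F),
      Real.log ((σ (εF i) : ℝ)) = sgn i σ * Real.log (ε i) := by
    intro i σ
    by_cases h : σ (sd i) = sd i
    · have hs : sgn i σ = 1 := by simp only [hsgn, if_pos h]
      rw [hσε i σ, hs, one_mul, ← hform i]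
      ring_nf
    · have hs : sgn i σ = -1 := by simp only [hsgn, if_neg h]
      rw [hσε i σ, hs]
      set v : ℝ := ((a i : ℝ) + (b i : ℝ) * (-1 * Real.sqrt ((d i : ℤ) : ℝ))) / 2 with hv
      have hsq2 : Real.sqrt ((d i : ℤ) : ℝ) ^ 2 = ((d i : ℤ) : ℝ) :=
        Real.sq_sqrt (le_of_lt (hdpos i))
      have hprod2 : v * ε i = (((a i : ℝ)) ^ 2 - ((d i : ℤ) : ℝ) * ((b i : ℝ)) ^ 2) / 4 := by
        rw [hv, hform i]
        linear_combination (-((b i : ℝ)) ^ 2 / 4) * hsq2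
      have hvε : v * ε i = 1 ∨ v * ε i = -1 := by
        rcases hnorm i with hn | hn
        · left
          have hc : ((a i : ℝ)) ^ 2 - ((d i : ℤ) : ℝ) * ((b i : ℝ)) ^ 2 = 4 := by
            exact_mod_cast congrArg (Int.cast : ℤ → ℝ) hn
          rw [hprod2, hc]; norm_num
        · right
          have hc : ((a i : ℝ)) ^ 2 - ((d i : ℤ) : ℝ) * ((b i : ℝ)) ^ 2 = -4 := by
            exact_mod_cast congrArg (Int.cast : ℤ → ℝ) hn
          rw [hprod2, hc]; norm_num
      rcases hvε with hn | hn
      · rw [eq_inv_of_mul_eq_one_left hn, Real.log_inv]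
        ring
      · have h2 : (-v) * ε i = 1 := by linarith
        have h3 : v = -(ε i)⁻¹ := by
          have := eq_inv_of_mul_eq_one_left h2
          linarith
        rw [h3, Real.log_neg_eq_log, Real.log_inv]
        ring
  have hrel : ∀ σ : F ≃ₐ[ℚ] F, ∑ i, (m i : ℝ) * (sgn i σ * Real.log (ε i)) = 0 := by
    intro σ
    have hF1 : ∏ i, εF i ^ m i = 1 := by
      apply Subtype.ext
      have hval : F.val (∏ i, εF i ^ m i) = ∏ i, ε i ^ m i := by
        rw [map_prod]
        exact Finset.prod_congr rfl fun i _ => by rw [map_zpow₀]; rfl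
      show F.val _ = F.val 1
      rw [hval, hprod, map_one]
    have hσ1 : ∏ i, σ (εF i) ^ m i = 1 := by
      rw [← map_one σ, ← hF1, map_prod]
      exact Finset.prod_congr rfl fun i _ => by rw [map_zpow₀]
    have hvalσ : ∏ i, ((σ (εF i) : ℝ)) ^ m i = 1 := by
      have := congrArg F.val hσ1
      rw [map_prod, map_one] at this
      rw [← this]
      exact Finset.prod_congr rfl fun i _ => by rw [map_zpow₀]; rfl
    have hne : ∀ i ∈ Finset.univ, ((σ (εF i) : ℝ)) ^ m i ≠ 0 := by
      intro i _
      apply zpow_ne_zero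
      intro h0
      have hz : σ (εF i) = 0 := Subtype.ext h0
      exact hεF_ne i (σ.injective (hz.trans (map_zero σ).symm))
    have hterm : ∀ i ∈ Finset.univ, (m i : ℝ) * (sgn i σ * Real.log (ε i))
        = Real.log (((σ (εF i) : ℝ)) ^ m i) := by
      intro i _
      rw [Real.log_zpow, hlogε i σ]
    rw [Finset.sum_congr rfl hterm, ← Real.log_prod hne, hvalσ, Real.log_one]
  -- orthogonality of the sign characters
  have hdiag : ∀ i (σ : F ≃ₐ[ℚ] F), sgn i σ * sgn i σ = 1 := by
    intro i σ
    by_cases h : σ (sd i) = sd i <;> simp [hsgn, h]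
  have horth : ∀ i j, i ≠ j → ∑ σ : F ≃ₐ[ℚ] F, sgn i σ * sgn j σ = 0 := by
    intro i j hij
    set u : F := sd i * sd j with hu
    have hu_ne : u ≠ 0 := mul_ne_zero (hsd_ne i) (hsd_ne j)
    have hneg_ne : -u ≠ u := by
      intro h
      apply hu_ne
      have h2 : (2 : F) * u = 0 := by linear_combination - h
      rcases mul_eq_zero.mp h2 with h3 | h3
      · exact absurd h3 two_ne_zero
      · exact h3
    have hudich : ∀ σ : F ≃ₐ[ℚ] F, σ u = u ∨ σ u = -u := by
      intro σ
      rw [hu, map_mul]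
      rcases hdich σ i with h | h <;> rcases hdich σ j with h' | h' <;> rw [h, h']
      · exact Or.inl rfl
      · exact Or.inr (by ring)
      · exact Or.inr (by ring)
      · exact Or.inl (by ring)
    have hterm : ∀ σ : F ≃ₐ[ℚ] F, sgn i σ * sgn j σ = (if σ u = u then (1:ℝ) else -1) := by
      intro σ
      by_cases hi : σ (sd i) = sd i <;> by_cases hj : σ (sd j) = sd j
      · have : σ u = u := by rw [hu, map_mul, hi, hj]
        simp [hsgn, hi, hj, this]
      · have h' : σ (sd j) = - sd j := (hdich σ j).resolve_left hj
        have : σ u = -u := by rw [hu, map_mul, hi, h']; ring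
        rw [this]
        simp [hsgn, hi, hj, hneg_ne]
      · have h' : σ (sd i) = - sd i := (hdich σ i).resolve_left hi
        have : σ u = -u := by rw [hu, map_mul, h', hj]; ring
        rw [this]
        simp [hsgn, hi, hj, hneg_ne]
      · have h' : σ (sd i) = - sd i := (hdich σ i).resolve_left hi
        have h'' : σ (sd j) = - sd j := (hdich σ j).resolve_left hj
        have : σ u = u := by rw [hu, map_mul, h', h'']; ring
        simp [hsgn, hi, hj, this]
    -- there exists an automorphism moving u
    have hex : ∃ τ : F ≃ₐ[ℚ] F, τ u ≠ u := by
      by_contra hall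
      push_neg at hall
      have humem : u ∈ IntermediateField.fixedField (⊤ : Subgroup (F ≃ₐ[ℚ] F)) := by
        intro g
        exact hall g.1
      have hfix : IntermediateField.fixedField (⊤ : Subgroup (F ≃ₐ[ℚ] F)) = ⊥ :=
        ((IsGalois.tfae (F := ℚ) (E := F)).out 0 1).mp (by infer_instance)
      rw [hfix, IntermediateField.mem_bot] at humem
      obtain ⟨q, hq⟩ := humem
      have hqval : ((q : ℚ) : ℝ) = Real.sqrt ((d i : ℤ) : ℝ) * Real.sqrt ((d j : ℤ) : ℝ) := by
        have := congrArg F.val hq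
        rw [show F.val (algebraMap ℚ F q) = ((q : ℚ) : ℝ) from rfl] at this
        rw [this]
        rfl
      have hsqrtmul : Real.sqrt (((d i * d j : ℤ) : ℝ)) = ((q : ℚ) : ℝ) := by
        rw [hqval]
        push_cast
        exact Real.sqrt_mul (le_of_lt (hdpos i)) _
      have hnotirr : ¬ Irrational (Real.sqrt (((d i * d j : ℤ) : ℝ))) := by
        rw [hsqrtmul]
        exact Rat.not_irrational q
      rw [irrational_sqrt_intCast_iff] at hnotirr
      push_neg at hnotirr
      by_cases hsq : IsSquare (d i * d j)
      · have := squarefree_eq_of_mul_isSquare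
          (lt_trans zero_lt_one (hd_gt i)) (hd_sqfree i) (hd_sqfree j) hsq
        exact hij (hd_distinct this)
      · have := hnotirr hsq
        have hpos : (0:ℤ) < d i * d j :=
          mul_pos (lt_trans zero_lt_one (hd_gt i)) (lt_trans zero_lt_one (hd_gt j))
        omega
    obtain ⟨τ, hτ⟩ := hex
    have hτu : τ u = -u := (hudich τ).resolve_left hτ
    have hflip : ∀ σ : F ≃ₐ[ℚ] F,
        (if (τ * σ) u = u then (1:ℝ) else -1) = - (if σ u = u then (1:ℝ) else -1) := by
      intro σ
      have hts : (τ * σ) u = τ (σ u) := rfl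
      rcases hudich σ with h | h
      · rw [hts, h, hτu, if_neg hneg_ne, if_pos rfl]
      · have : τ (σ u) = u := by rw [h, map_neg, hτu]; ring
        rw [hts, this, if_pos rfl, if_neg (by rw [h]; exact fun hh => hneg_ne hh)]
        norm_num
    have hkey : ∑ σ : F ≃ₐ[ℚ] F, (if σ u = u then (1:ℝ) else -1) = 0 := by
      have hbij : Function.Bijective (fun σ : F ≃ₐ[ℚ] F => τ * σ) :=
        (Group.mulLeft_bijective τ)
      have heq : ∑ σ : F ≃ₐ[ℚ] F, (if σ u = u then (1:ℝ) else -1)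
          = ∑ σ : F ≃ₐ[ℚ] F, (if (τ * σ) u = u then (1:ℝ) else -1) :=
        (Fintype.sum_bijective _ hbij _ _ (fun σ => rfl)).symm
      have heq2 : ∑ σ : F ≃ₐ[ℚ] F, (if (τ * σ) u = u then (1:ℝ) else -1)
          = - ∑ σ : F ≃ₐ[ℚ] F, (if σ u = u then (1:ℝ) else -1) := by
        rw [← Finset.sum_neg_distrib]
        exact Finset.sum_congr rfl fun σ _ => hflip σ
      have := heq.trans heq2
      linarith
    rw [Finset.sum_congr rfl fun σ _ => hterm σ, hkey]
  -- final assembly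
  intro j
  have hsum : ∑ σ : F ≃ₐ[ℚ] F, sgn j σ * (∑ i, (m i : ℝ) * (sgn i σ * Real.log (ε i))) = 0 :=
    Finset.sum_eq_zero fun σ _ => by rw [hrel σ, mul_zero]
  have hswap : ∑ σ : F ≃ₐ[ℚ] F, sgn j σ * (∑ i, (m i : ℝ) * (sgn i σ * Real.log (ε i)))
      = ∑ i, ((m i : ℝ) * Real.log (ε i)) * (∑ σ : F ≃ₐ[ℚ] F, sgn i σ * sgn j σ) := by
    rw [Finset.sum_congr rfl fun σ (_ : σ ∈ Finset.univ) => Finset.mul_sum _ _ (sgn j σ)]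
    rw [Finset.sum_comm]
    refine Finset.sum_congr rfl fun i _ => ?_
    rw [Finset.mul_sum]
    refine Finset.sum_congr rfl fun σ _ => ?_
    ring
  have heval : ∑ i, ((m i : ℝ) * Real.log (ε i)) * (∑ σ : F ≃ₐ[ℚ] F, sgn i σ * sgn j σ)
      = ((m j : ℝ) * Real.log (ε j)) * (Fintype.card (F ≃ₐ[ℚ] F) : ℝ) := by
    rw [Finset.sum_eq_single j]
    · congr 1
      rw [Finset.sum_congr rfl fun σ _ => hdiag j σ]
      simp [Finset.card_univ]
    · intro i _ hij
      rw [horth i j hij, mul_zero]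
    · intro h
      exact absurd (Finset.mem_univ j) h
  have hcard : (0:ℝ) < (Fintype.card (F ≃ₐ[ℚ] F) : ℝ) := by
    exact_mod_cast Fintype.card_pos
  have hlogpos : 0 < Real.log (ε j) := Real.log_pos (hε1 j)
  have hmz : ((m j : ℝ) * Real.log (ε j)) * (Fintype.card (F ≃ₐ[ℚ] F) : ℝ) = 0 := by
    rw [← heval, ← hswap, hsum]
  have : (m j : ℝ) = 0 := by
    rcases mul_eq_zero.mp hmz with h | h
    · rcases mul_eq_zero.mp h with h' | h'
      · exact h'
      · exact absurd h' (ne_of_gt hlogpos)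
    · exact absurd h (ne_of_gt hcard)
  exact_mod_cast this
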